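/- For any two distinct points X, Y of the Gromov–Hausdorff space of compact metric spaces (d_GH(X,Y) > 0), there exists a compact metric space Z with d_GH(X,Z) + d_GH(Z,Y) = d_GH(X,Y), d_GH(X,Z) > 0, and d_GH(Z,Y) > 0; i.e., the open metric segment [X,Y] ∖ {X,Y} is nonempty. -/

import Mathlib

open GromovHausdorff Metric Set

/-- Type synonym for a correspondence `R ⊆ X × Y`, to be endowed with the average metric. -/
def MidSpace {X Y : Type*} (R : Set (X × Y)) : Type _ := R

namespace MidSpace

variable {X Y : Type*} [MetricSpace X] [MetricSpace Y] (R : Set (X × Y))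

/-- The underlying element of the correspondence. -/
def toR (p : MidSpace R) : R := p

def ofR (p : R) : MidSpace R := p

noncomputable instance : MetricSpace (MidSpace R) where
  dist p q := (dist (toR R p).1.1 (toR R q).1.1 + dist (toR R p).1.2 (toR R q).1.2) / 2
  dist_self p := by simp
  dist_comm p q := by simp [dist_comm]
  dist_triangle p q r := by
    have h1 := dist_triangle (toR R p).1.1 (toR R q).1.1 (toR R r).1.1
    have h2 := dist_triangle (toR R p).1.2 (toR R q).1.2 (toR R r).1.2
    linarith
  eq_of_dist_eq_zero := by
    intro p q hpq
    have h1 : dist (toR R p).1.1 (toR R q).1.1 = 0 ∧ dist (toR R p).1.2 (toR R q).1.2 = 0 := by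
      constructor <;>
        nlinarith [dist_nonneg (x := (toR R p).1.1) (y := (toR R q).1.1),
          dist_nonneg (x := (toR R p).1.2) (y := (toR R q).1.2)]
    have e1 := eq_of_dist_eq_zero h1.1
    have e2 := eq_of_dist_eq_zero h1.2
    show toR R p = toR R q
    exact Subtype.ext (Prod.ext e1 e2)

theorem dist_eq (p q : MidSpace R) :
    dist p q = (dist (toR R p).1.1 (toR R q).1.1 + dist (toR R p).1.2 (toR R q).1.2) / 2 := rfl

theorem lipschitz_ofR : LipschitzWith 1 (ofR R) := by
  refine LipschitzWith.of_dist_le_mul fun p q => ?_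
  have : dist p q = max (dist p.1.1 q.1.1) (dist p.1.2 q.1.2) := by
    rw [Subtype.dist_eq, Prod.dist_eq]
  rw [NNReal.coe_one, one_mul, this]
  have h1 := le_max_left (dist p.1.1 q.1.1) (dist p.1.2 q.1.2)
  have h2 := le_max_right (dist p.1.1 q.1.1) (dist p.1.2 q.1.2)
  show (dist p.1.1 q.1.1 + dist p.1.2 q.1.2) / 2 ≤ _
  linarith

omit [MetricSpace X] [MetricSpace Y] in
theorem surjective_ofR : Function.Surjective (ofR R) := fun p => ⟨p, rfl⟩

theorem compactSpace [CompactSpace X] [CompactSpace Y] (hR : IsClosed R) :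
    CompactSpace (MidSpace R) := by
  haveI : CompactSpace R := isCompact_iff_compactSpace.1 hR.isCompact
  constructor
  rw [← Set.range_eq_univ.2 (surjective_ofR R)]
  exact isCompact_range (lipschitz_ofR R).continuous

end MidSpace

/-- For distinct points of the Gromov–Hausdorff space, the open metric segment is nonempty:
there is a compact space `Z` strictly between `X` and `Y`. -/
theorem stmt15 {X Y : Type*} [MetricSpace X] [CompactSpace X] [Nonempty X]
    [MetricSpace Y] [CompactSpace Y] [Nonempty Y]
    (h : 0 < GromovHausdorff.ghDist X Y) :
    ∃ p : GromovHausdorff.GHSpace,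
      dist (GromovHausdorff.toGHSpace X) p + dist p (GromovHausdorff.toGHSpace Y) =
        dist (GromovHausdorff.toGHSpace X) (GromovHausdorff.toGHSpace Y) ∧
      0 < dist (GromovHausdorff.toGHSpace X) p ∧
      0 < dist p (GromovHausdorff.toGHSpace Y) := by
  set δ : ℝ := ghDist X Y with hδdef
  have hδ0 : 0 < δ := h
  -- the optimal coupling
  set il := optimalGHInjl X Y
  set ir := optimalGHInjr X Y
  have Iil : Isometry il := isometry_optimalGHInjl X Y
  have Iir : Isometry ir := isometry_optimalGHInjr X Y
  have hH : hausdorffDist (range il) (range ir) = δ := hausdorffDist_optimal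
  have hcl : IsCompact (range il) := isCompact_range Iil.continuous
  have hcr : IsCompact (range ir) := isCompact_range Iir.continuous
  have hfin : EMetric.hausdorffEdist (range il) (range ir) ≠ ⊤ :=
    Metric.hausdorffEdist_ne_top_of_nonempty_of_bounded (range_nonempty _) (range_nonempty _)
      hcl.isBounded hcr.isBounded
  -- the correspondence
  set R : Set (X × Y) := {p | dist (il p.1) (ir p.2) ≤ δ} with hRdef
  have hRmem : ∀ p : X × Y, p ∈ R ↔ dist (il p.1) (ir p.2) ≤ δ := fun p => Iff.rfl
  have hcorr1 : ∀ x : X, ∃ y : Y, (x, y) ∈ R := by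
    intro x
    have h1 : infDist (il x) (range ir) ≤ δ := by
      rw [← hH]
      exact infDist_le_hausdorffDist_of_mem (mem_range_self x) hfin
    obtain ⟨z, hz, hz'⟩ := hcr.exists_infDist_eq_dist (range_nonempty _) (il x)
    obtain ⟨y, rfl⟩ := hz
    exact ⟨y, by rw [hRmem]; rw [hz'] at h1; exact h1⟩
  have hcorr2 : ∀ y : Y, ∃ x : X, (x, y) ∈ R := by
    intro y
    have h1 : infDist (ir y) (range il) ≤ δ := by
      rw [← hH, hausdorffDist_comm]
      exact infDist_le_hausdorffDist_of_mem (mem_range_self y) (by rwa [EMetric.hausdorffEdist_comm])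
    obtain ⟨z, hz, hz'⟩ := hcl.exists_infDist_eq_dist (range_nonempty _) (ir y)
    obtain ⟨x, rfl⟩ := hz
    exact ⟨x, by rw [hRmem, dist_comm]; rw [hz'] at h1; exact h1⟩
  -- distortion bound
  have hdis : ∀ p q : R, |dist p.1.1 q.1.1 - dist p.1.2 q.1.2| ≤ 2 * δ := by
    rintro ⟨⟨x, y⟩, hp⟩ ⟨⟨x', y'⟩, hq⟩
    rw [hRmem] at hp hq
    have e1 : dist x x' = dist (il x) (il x') := (Iil.dist_eq x x').symm
    have e2 : dist y y' = dist (ir y) (ir y') := (Iir.dist_eq y y').symm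
    have t1 : dist (il x) (il x') ≤ dist (il x) (ir y) + dist (ir y) (ir y') + dist (ir y') (il x') :=
      dist_triangle4 _ _ _ _
    have t2 : dist (ir y) (ir y') ≤ dist (ir y) (il x) + dist (il x) (il x') + dist (il x') (ir y') :=
      dist_triangle4 _ _ _ _
    have c1 : dist (ir y') (il x') = dist (il x') (ir y') := dist_comm _ _
    have c2 : dist (ir y) (il x) = dist (il x) (ir y) := dist_comm _ _
    rw [abs_le]
    constructor <;> simp only at * <;> nlinarith
  have hRcl : IsClosed R := by
    have : Continuous fun p : X × Y => dist (il p.1) (ir p.2) := (Iil.continuous.comp continuous_fst).dist (Iir.continuous.comp continuous_snd)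
    exact isClosed_le this continuous_const
  haveI : CompactSpace (MidSpace R) := MidSpace.compactSpace R hRcl
  haveI : Nonempty (MidSpace R) := by
    obtain ⟨y, hy⟩ := hcorr1 (Classical.arbitrary X)
    exact ⟨MidSpace.ofR R ⟨_, hy⟩⟩
  -- bound on ghDist (MidSpace R) X
  have hbX : ghDist (MidSpace R) X ≤ δ / 2 := by
    have := ghDist_le_of_approx_subsets (X := MidSpace R) (Y := X)
      (s := (univ : Set (MidSpace R))) (fun z => (MidSpace.toR R z.1).1.1)
      (ε₁ := 0) (ε₂ := δ) (ε₃ := 0)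
      (fun z => ⟨z, mem_univ z, by simp⟩)
      (fun x => by
        obtain ⟨y, hy⟩ := hcorr1 x
        exact ⟨⟨MidSpace.ofR R ⟨(x, y), hy⟩, mem_univ _⟩, by
          simp [MidSpace.toR, MidSpace.ofR]⟩)
      (fun z z' => by
        rw [Subtype.dist_eq, MidSpace.dist_eq]
        have := hdis (MidSpace.toR R z.1) (MidSpace.toR R z'.1)
        rw [abs_le] at this ⊢
        constructor <;> [linarith [this.2]; linarith [this.1]])
    linarith
  have hbY : ghDist (MidSpace R) Y ≤ δ / 2 := by
    have := ghDist_le_of_approx_subsets (X := MidSpace R) (Y := Y)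
      (s := (univ : Set (MidSpace R))) (fun z => (MidSpace.toR R z.1).1.2)
      (ε₁ := 0) (ε₂ := δ) (ε₃ := 0)
      (fun z => ⟨z, mem_univ z, by simp⟩)
      (fun y => by
        obtain ⟨x, hx⟩ := hcorr2 y
        exact ⟨⟨MidSpace.ofR R ⟨(x, y), hx⟩, mem_univ _⟩, by
          simp [MidSpace.toR, MidSpace.ofR]⟩)
      (fun z z' => by
        rw [Subtype.dist_eq, MidSpace.dist_eq]
        have := hdis (MidSpace.toR R z.1) (MidSpace.toR R z'.1)
        rw [abs_le] at this ⊢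
        constructor <;> [linarith [this.1]; linarith [this.2]])
    linarith
  refine ⟨toGHSpace (MidSpace R), ?_, ?_, ?_⟩ <;>
  · have d1 : dist (toGHSpace X) (toGHSpace (MidSpace R)) ≤ δ / 2 := by
      rw [dist_comm]; exact hbX
    have d2 : dist (toGHSpace (MidSpace R)) (toGHSpace Y) ≤ δ / 2 := hbY
    have tri : δ ≤ dist (toGHSpace X) (toGHSpace (MidSpace R)) +
        dist (toGHSpace (MidSpace R)) (toGHSpace Y) := dist_triangle _ _ _
    have : (dist (toGHSpace X) (toGHSpace Y) : ℝ) = δ := rfl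
    first
    | (rw [this]; linarith)
    | linarith
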